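/- For every real z < 0, the Mills-type ratio satisfies the lower bound φ(z)/Φ(z) > (√(z²+8) − 3z)/4, where φ and Φ are the PDF and CDF of the standard normal distribution. -/

import Mathlib

open Real MeasureTheory Filter

noncomputable def stdPhi (z : ℝ) : ℝ := (Real.sqrt (2 * Real.pi))⁻¹ * Real.exp (-z ^ 2 / 2)

noncomputable def stdCDF (z : ℝ) : ℝ := ∫ t in Set.Iic z, stdPhi t

lemma stdPhi_integrable : Integrable stdPhi := by
  have h : Integrable (fun x : ℝ => Real.exp (-(1/2 : ℝ) * x ^ 2)) :=
    integrable_exp_neg_mul_sq (by norm_num)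
  have := h.const_mul (Real.sqrt (2 * Real.pi))⁻¹
  refine this.congr ?_
  filter_upwards with x
  unfold stdPhi
  ring_nf

lemma stdPhi_pos (x : ℝ) : 0 < stdPhi x := by
  unfold stdPhi
  positivity

lemma stdPhi_continuous : Continuous stdPhi := by
  unfold stdPhi
  fun_prop

lemma stdCDF_eq (x : ℝ) : stdCDF x = stdCDF 0 + ∫ t in (0:ℝ)..x, stdPhi t := by
  have := intervalIntegral.integral_Iic_sub_Iic (stdPhi_integrable.integrableOn (s := Set.Iic 0))
    (stdPhi_integrable.integrableOn (s := Set.Iic x))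
  unfold stdCDF
  linarith [this]

lemma stdCDF_hasDerivAt (x : ℝ) : HasDerivAt stdCDF (stdPhi x) x := by
  have h : HasDerivAt (fun u => ∫ t in (0:ℝ)..u, stdPhi t) (stdPhi x) x :=
    intervalIntegral.integral_hasDerivAt_right
      (stdPhi_integrable.intervalIntegrable)
      (stdPhi_continuous.stronglyMeasurableAtFilter _ _)
      stdPhi_continuous.continuousAt
  have : HasDerivAt (fun u => stdCDF 0 + ∫ t in (0:ℝ)..u, stdPhi t) (stdPhi x) x :=
    (h.const_add _)
  refine this.congr_of_eventuallyEq ?_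
  filter_upwards with u using (stdCDF_eq u)

lemma stdCDF_pos (x : ℝ) : 0 < stdCDF x := by
  unfold stdCDF
  rw [MeasureTheory.setIntegral_pos_iff_support_of_nonneg_ae]
  · have : Function.support stdPhi = Set.univ := by
      ext t; simp [Function.support, (stdPhi_pos t).ne']
    rw [this, Set.univ_inter]
    simp [Real.volume_Iic]
  · filter_upwards with t using (stdPhi_pos t).le
  · exact stdPhi_integrable.integrableOn

lemma stdCDF_tendsto : Tendsto stdCDF atBot (nhds 0) := by
  have h := MeasureTheory.intervalIntegral_tendsto_integral_Iic (μ := volume) (f := stdPhi) 0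
    (stdPhi_integrable.integrableOn) (tendsto_id (α := ℝ) (x := atBot))
  have h2 : Tendsto (fun a : ℝ => stdCDF 0 - ∫ t in a..(0:ℝ), stdPhi t) atBot
      (nhds (stdCDF 0 - ∫ t in Set.Iic (0:ℝ), stdPhi t)) := tendsto_const_nhds.sub h
  have h3 : (stdCDF 0 - ∫ t in Set.Iic (0:ℝ), stdPhi t) = 0 := by
    unfold stdCDF; ring
  rw [h3] at h2
  refine h2.congr ?_
  intro a
  rw [stdCDF_eq a, intervalIntegral.integral_symm]
  ring

noncomputable def sFun (z : ℝ) : ℝ := Real.sqrt (z ^ 2 + 8)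

lemma sFun_pos (z : ℝ) : 0 < sFun z := Real.sqrt_pos.2 (by positivity)

lemma sFun_sq (z : ℝ) : sFun z ^ 2 = z ^ 2 + 8 := Real.sq_sqrt (by positivity)

lemma sFun_hasDerivAt (z : ℝ) : HasDerivAt sFun (z / sFun z) z := by
  have h : HasDerivAt (fun z : ℝ => z ^ 2 + 8) (2 * z) z := by
    simpa using ((hasDerivAt_pow 2 z).add_const 8)
  have := h.sqrt (by positivity)
  refine this.congr_deriv ?_
  unfold sFun
  field_simp

lemma denom_pos {z : ℝ} (hz : z ≤ 0) : 0 < sFun z - 3 * z := by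
  have := sFun_pos z
  nlinarith

noncomputable def HF (z : ℝ) : ℝ :=
  4 * Real.exp (-z ^ 2 / 2) * (sFun z - 3 * z)⁻¹ - Real.sqrt (2 * Real.pi) * stdCDF z

lemma key_ineq {z : ℝ} (hz : z < 0) :
    0 < 4 * (3 * sFun z - z) - sFun z * (sFun z - 3 * z) * (sFun z + z) := by
  set s := sFun z with hsdef
  have hs : 0 < s := sFun_pos z
  have hs2 : s ^ 2 = z ^ 2 + 8 := sFun_sq z
  have key : (s * (z ^ 2 + 2)) ^ 2 - (z * (z ^ 2 + 6)) ^ 2 = 32 := by nlinarith [hs2]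
  have h1 : 0 < s * (z ^ 2 + 2) + -(z * (z ^ 2 + 6)) := by
    have hnz : 0 < -z := by linarith
    nlinarith [mul_pos hs (show (0:ℝ) < z ^ 2 + 2 by positivity),
      mul_pos hnz (show (0:ℝ) < z ^ 2 + 6 by positivity)]
  have h2 : 0 < s * (z ^ 2 + 2) + z * (z ^ 2 + 6) := by nlinarith [key, h1]
  nlinarith [hs2, h2, hs]

lemma HF_hasDerivAt {z : ℝ} (hz : z < 0) :
    HasDerivAt HF
      (Real.exp (-z ^ 2 / 2) *
        ((4 * (3 * sFun z - z) - sFun z * (sFun z - 3 * z) * (sFun z + z)) /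
          (sFun z * (sFun z - 3 * z) ^ 2))) z := by
  have hs : 0 < sFun z := sFun_pos z
  have hd : 0 < sFun z - 3 * z := denom_pos hz.le
  have hs2 : sFun z ^ 2 = z ^ 2 + 8 := sFun_sq z
  have he : HasDerivAt (fun z : ℝ => Real.exp (-z ^ 2 / 2))
      (-z * Real.exp (-z ^ 2 / 2)) z := by
    have h1 : HasDerivAt (fun z : ℝ => -z ^ 2 / 2) (-z) z := by
      have := (hasDerivAt_pow 2 z).neg.div_const 2
      refine this.congr_deriv ?_; ring
    simpa [mul_comm] using h1.exp
  have hD : HasDerivAt (fun z => sFun z - 3 * z) (z / sFun z - 3) z := by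
    exact ((sFun_hasDerivAt z).sub ((hasDerivAt_id z).const_mul 3)).congr_deriv (by simp)
  have hDinv : HasDerivAt (fun z => (sFun z - 3 * z)⁻¹)
      (-(z / sFun z - 3) / (sFun z - 3 * z) ^ 2) z := hD.inv hd.ne'
  have hA : HasDerivAt (fun z => 4 * Real.exp (-z ^ 2 / 2) * (sFun z - 3 * z)⁻¹)
      (4 * (-z * Real.exp (-z ^ 2 / 2)) * (sFun z - 3 * z)⁻¹ +
        4 * Real.exp (-z ^ 2 / 2) * (-(z / sFun z - 3) / (sFun z - 3 * z) ^ 2)) z :=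
    ((he.const_mul 4).mul hDinv)
  have hB : HasDerivAt (fun z => Real.sqrt (2 * Real.pi) * stdCDF z)
      (Real.sqrt (2 * Real.pi) * stdPhi z) z := (stdCDF_hasDerivAt z).const_mul _
  have hH := hA.sub hB
  refine hH.congr_deriv (Eq.symm ?_)
  have hsqrt : Real.sqrt (2 * Real.pi) * stdPhi z = Real.exp (-z ^ 2 / 2) := by
    unfold stdPhi
    have : Real.sqrt (2 * Real.pi) ≠ 0 := by positivity
    field_simp
  rw [hsqrt]
  generalize Real.exp (-z ^ 2 / 2) = e
  field_simp
  ring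

lemma HF_tendsto : Tendsto HF atBot (nhds 0) := by
  have he : Tendsto (fun z : ℝ => Real.exp (-z ^ 2 / 2)) atBot (nhds 0) := by
    apply Real.tendsto_exp_atBot.comp
    have hb : Tendsto (fun z : ℝ => z + 1/2) atBot atBot :=
      tendsto_atBot_add_const_right _ _ tendsto_id
    exact tendsto_atBot_mono (fun z => by nlinarith [sq_nonneg (z + 1)]) hb
  have hlin : Tendsto (fun z : ℝ => -3 * z) atBot atTop := by
    have := tendsto_neg_atBot_atTop.const_mul_atTop (by norm_num : (0:ℝ) < 3)
    simpa [mul_comm, mul_neg, neg_mul] using this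
  have hge : ∀ z : ℝ, -3 * z ≤ sFun z - 3 * z := fun z => by
    have := (sFun_pos z).le; linarith
  have hdinv : Tendsto (fun z : ℝ => (sFun z - 3 * z)⁻¹) atBot (nhds 0) :=
    tendsto_inv_atTop_zero.comp (tendsto_atTop_mono hge hlin)
  have hA : Tendsto (fun z : ℝ => 4 * Real.exp (-z ^ 2 / 2) * (sFun z - 3 * z)⁻¹)
      atBot (nhds 0) := by
    have := ((he.const_mul 4).mul hdinv)
    simpa using this
  have hB : Tendsto (fun z : ℝ => Real.sqrt (2 * Real.pi) * stdCDF z) atBot (nhds 0) := by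
    have := stdCDF_tendsto.const_mul (Real.sqrt (2 * Real.pi))
    simpa using this
  have := hA.sub hB
  rw [sub_zero] at this; exact this

lemma HF_continuousOn : ContinuousOn HF (Set.Iic 0) := by
  have hc1 : Continuous fun z : ℝ => 4 * Real.exp (-z ^ 2 / 2) := by fun_prop
  have hc2 : Continuous fun z : ℝ => sFun z - 3 * z := by
    unfold sFun; fun_prop
  have hc3 : Continuous stdCDF :=
    continuous_iff_continuousAt.2 fun x => (stdCDF_hasDerivAt x).continuousAt
  apply ContinuousOn.sub
  · exact (hc1.continuousOn.mul (hc2.continuousOn.inv₀ fun x hx => (denom_pos hx).ne'))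
  · fun_prop

lemma HF_pos {z : ℝ} (hz : z < 0) : 0 < HF z := by
  have mono : StrictMonoOn HF (Set.Iic 0) := by
    apply strictMonoOn_of_deriv_pos (convex_Iic 0) HF_continuousOn
    intro x hx
    rw [interior_Iic] at hx
    rw [(HF_hasDerivAt hx).deriv]
    have hs := sFun_pos x
    have hd := denom_pos hx.le
    exact mul_pos (Real.exp_pos _) (div_pos (key_ineq hx) (by positivity))
  have hnonneg : ∀ w : ℝ, w < 0 → 0 ≤ HF w := by
    intro w hw
    apply le_of_tendsto HF_tendsto
    filter_upwards [eventually_lt_atBot w] with u hu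
    exact (mono (Set.mem_Iic.2 (by linarith : u ≤ (0:ℝ))) (Set.mem_Iic.2 hw.le) hu).le
  have h1 : HF (z - 1) < HF z :=
    mono (Set.mem_Iic.2 (by linarith)) (Set.mem_Iic.2 hz.le) (by linarith)
  have h2 : 0 ≤ HF (z - 1) := hnonneg _ (by linarith)
  linarith

theorem mills_lower_bound (z : ℝ) (hz : z < 0) :
    stdPhi z / stdCDF z > (Real.sqrt (z ^ 2 + 8) - 3 * z) / 4 := by
  have hΦ := stdCDF_pos z
  have hH := HF_pos hz
  have hd := denom_pos hz.le
  have hq : (0:ℝ) < Real.sqrt (2 * Real.pi) := by positivity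
  have he : (0:ℝ) < Real.exp (-z ^ 2 / 2) := Real.exp_pos _
  rw [gt_iff_lt, div_lt_div_iff₀ (by norm_num) hΦ]
  have hs : Real.sqrt (z ^ 2 + 8) = sFun z := rfl
  unfold HF at hH
  have h1 : Real.sqrt (2 * Real.pi) * stdCDF z <
      4 * Real.exp (-z ^ 2 / 2) * (sFun z - 3 * z)⁻¹ := by linarith
  have h2 : Real.sqrt (2 * Real.pi) * stdCDF z * (sFun z - 3 * z) <
      4 * Real.exp (-z ^ 2 / 2) := by
    calc Real.sqrt (2 * Real.pi) * stdCDF z * (sFun z - 3 * z)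
        < 4 * Real.exp (-z ^ 2 / 2) * (sFun z - 3 * z)⁻¹ * (sFun z - 3 * z) :=
          mul_lt_mul_of_pos_right h1 hd
      _ = 4 * Real.exp (-z ^ 2 / 2) := by rw [mul_assoc, inv_mul_cancel₀ hd.ne', mul_one]
  rw [hs]
  unfold stdPhi
  rw [show (Real.sqrt (2 * Real.pi))⁻¹ * Real.exp (-z ^ 2 / 2) * 4
      = (Real.sqrt (2 * Real.pi))⁻¹ * (4 * Real.exp (-z ^ 2 / 2)) by ring]
  have h3 := mul_lt_mul_of_pos_left h2 (inv_pos.2 hq)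
  rw [show (Real.sqrt (2 * Real.pi))⁻¹ * (Real.sqrt (2 * Real.pi) * stdCDF z * (sFun z - 3 * z))
      = ((Real.sqrt (2 * Real.pi))⁻¹ * Real.sqrt (2 * Real.pi)) * (stdCDF z * (sFun z - 3 * z)) by ring,
    inv_mul_cancel₀ hq.ne', one_mul] at h3
  linarith [h3]
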